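/- arXiv:2201.10196 — 2 statements merged into one kernel-verified Lean document; each statement's English description precedes it below -/
import Mathlib

section
/- Let (X,d,μ) be a space of homogeneous type with upper dimension ω := log₂ C_μ. Then μ has a weak lower bound ω (i.e., there exist a constant C > 0 and a point x₀ ∈ X such that μ(B(x₀,r)) ≥ C·r^ω for every r ≥ 1) if and only if μ has a lower bound ω (i.e., there exists a constant C' > 0 such that μ(B(x,r)) ≥ C'·r^ω for every x ∈ X and every r > 0). -/
open MeasureTheory ENNReal

noncomputable section

namespace SHT

variable {X : Type*}

/-- The quasi-metric ball `B(x,r) := {y : d(x,y) < r}`. -/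
def ball (d : X → X → ℝ) (x : X) (r : ℝ) : Set X := {y | d x y < r}

/-- `(X, d, μ)` is a space of homogeneous type with quasi-triangle constant `A₀`
and doubling constant `Cμ`. -/
structure IsSHT [MeasurableSpace X] (d : X → X → ℝ) (μ : Measure X) (A₀ Cμ : ℝ) : Prop where
  one_le_A : 1 ≤ A₀
  nonneg : ∀ x y, 0 ≤ d x y
  eq_zero_iff : ∀ x y, d x y = 0 ↔ x = y
  symm : ∀ x y, d x y = d y x
  triangle : ∀ x y z, d x z ≤ A₀ * (d x y + d y z)
  measurable_ball : ∀ x r, MeasurableSet (ball d x r)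
  one_le_C : 1 ≤ Cμ
  ball_pos : ∀ x, ∀ r : ℝ, 0 < r → 0 < μ (ball d x r)
  ball_lt_top : ∀ x, ∀ r : ℝ, 0 < r → μ (ball d x r) < ⊤
  doubling : ∀ x, ∀ r : ℝ, 0 < r →
    μ (ball d x (2 * r)) ≤ ENNReal.ofReal Cμ * μ (ball d x r)

lemma doubling_pow [MeasurableSpace X] {d : X → X → ℝ} {μ : Measure X} {A₀ Cμ : ℝ}
    (h : IsSHT d μ A₀ Cμ) (x : X) {s : ℝ} (hs : 0 < s) (n : ℕ) :
    μ (ball d x (2 ^ n * s)) ≤ ENNReal.ofReal Cμ ^ n * μ (ball d x s) := by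
  induction n with
  | zero => simp
  | succ n ih =>
      have h2 : (2:ℝ) ^ (n+1) * s = 2 * (2 ^ n * s) := by ring
      rw [h2]
      calc μ (ball d x (2 * (2 ^ n * s)))
          ≤ ENNReal.ofReal Cμ * μ (ball d x (2 ^ n * s)) :=
            h.doubling x _ (by positivity)
        _ ≤ ENNReal.ofReal Cμ * (ENNReal.ofReal Cμ ^ n * μ (ball d x s)) :=
            mul_le_mul_right ih _
        _ = ENNReal.ofReal Cμ ^ (n+1) * μ (ball d x s) := by ring

lemma doubling_scale [MeasurableSpace X] {d : X → X → ℝ} {μ : Measure X} {A₀ Cμ : ℝ}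
    (h : IsSHT d μ A₀ Cμ) (x : X) {s lam : ℝ} (hs : 0 < s) (hlam : 1 ≤ lam)
    {ω : ℝ} (hω : ω = Real.logb 2 Cμ) :
    μ (ball d x (lam * s)) ≤ ENNReal.ofReal (Cμ * lam ^ ω) * μ (ball d x s) := by
  have hC0 : (0:ℝ) < Cμ := lt_of_lt_of_le one_pos h.one_le_C
  have hω0 : 0 ≤ ω := hω ▸ Real.logb_nonneg one_lt_two h.one_le_C
  have hlam0 : (0:ℝ) < lam := lt_of_lt_of_le one_pos hlam
  set n := ⌈Real.logb 2 lam⌉₊ with hn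
  have hlog : Real.logb 2 lam ≤ n := Nat.le_ceil _
  have hlog0 : 0 ≤ Real.logb 2 lam := Real.logb_nonneg one_lt_two hlam
  have h2n : lam ≤ 2 ^ n := by
    calc lam = (2:ℝ) ^ Real.logb 2 lam :=
          (Real.rpow_logb two_pos (by norm_num) hlam0).symm
      _ ≤ (2:ℝ) ^ (n:ℝ) := by
          exact Real.rpow_le_rpow_of_exponent_le one_le_two hlog
      _ = 2 ^ n := by
          rw [Real.rpow_natCast]
  have hsub : ball d x (lam * s) ⊆ ball d x (2 ^ n * s) := by
    intro y hy
    simp only [ball, Set.mem_setOf_eq] at hy ⊢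
    have : lam * s ≤ 2 ^ n * s := by nlinarith
    linarith
  have hCeq : (2:ℝ) ^ ω = Cμ := by
    rw [hω]; exact Real.rpow_logb two_pos (by norm_num) hC0
  have hCn : (Cμ : ℝ) ^ n ≤ Cμ * lam ^ ω := by
    have h1 : (Cμ : ℝ) ^ n = (2:ℝ) ^ (ω * n) := by
      rw [Real.rpow_mul (by norm_num : (0:ℝ) ≤ 2), hCeq, Real.rpow_natCast]
    have h2 : ω * n ≤ ω * (Real.logb 2 lam + 1) := by
      apply mul_le_mul_of_nonneg_left _ hω0
      have := Nat.ceil_lt_add_one hlog0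
      exact le_of_lt (by exact_mod_cast this)
    have h3 : (2:ℝ) ^ (ω * (Real.logb 2 lam + 1)) = lam ^ ω * Cμ := by
      rw [mul_add, mul_one, Real.rpow_add two_pos, hCeq, mul_comm ω (Real.logb 2 lam),
        Real.rpow_mul (by norm_num : (0:ℝ) ≤ 2), Real.rpow_logb two_pos (by norm_num) hlam0]
    calc (Cμ : ℝ) ^ n = (2:ℝ) ^ (ω * n) := h1
      _ ≤ (2:ℝ) ^ (ω * (Real.logb 2 lam + 1)) :=
          Real.rpow_le_rpow_of_exponent_le one_le_two h2
      _ = lam ^ ω * Cμ := h3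
      _ = Cμ * lam ^ ω := mul_comm _ _
  calc μ (ball d x (lam * s)) ≤ μ (ball d x (2 ^ n * s)) := measure_mono hsub
    _ ≤ ENNReal.ofReal Cμ ^ n * μ (ball d x s) := doubling_pow h x hs n
    _ ≤ ENNReal.ofReal (Cμ * lam ^ ω) * μ (ball d x s) := by
        gcongr
        rw [← ENNReal.ofReal_pow hC0.le]
        exact ENNReal.ofReal_le_ofReal hCn

/-- On a space of homogeneous type with upper dimension
`ω := log₂ Cμ`, the measure has a weak lower bound `ω` (a lower mass bound
`μ(B(x₀,r)) ≥ C·r^ω` for a single point `x₀` and all `r ≥ 1`) if and only if it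
has a (global) lower bound `ω` (`μ(B(x,r)) ≥ C'·r^ω` for all `x` and all `r > 0`). -/
theorem weak_lower_bound_iff_lower_bound
    [MeasurableSpace X] [Nonempty X]
    (d : X → X → ℝ) (μ : Measure X) (A₀ Cμ : ℝ)
    (hSHT : IsSHT d μ A₀ Cμ) (ω : ℝ) (hω : ω = Real.logb 2 Cμ) :
    (∃ C : ℝ, 0 < C ∧ ∃ x₀ : X, ∀ r : ℝ, 1 ≤ r →
        ENNReal.ofReal (C * r ^ ω) ≤ μ (ball d x₀ r)) ↔
      (∃ C' : ℝ, 0 < C' ∧ ∀ x : X, ∀ r : ℝ, 0 < r →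
        ENNReal.ofReal (C' * r ^ ω) ≤ μ (ball d x r)) := by
  constructor
  · rintro ⟨C, hC, x₀, hbd⟩
    have hC0 : (0:ℝ) < Cμ := lt_of_lt_of_le one_pos hSHT.one_le_C
    have hA0 : (0:ℝ) < A₀ := lt_of_lt_of_le one_pos hSHT.one_le_A
    have hω0 : 0 ≤ ω := hω ▸ Real.logb_nonneg one_lt_two hSHT.one_le_C
    have ha : (0:ℝ) < (2*A₀) ^ ω := Real.rpow_pos_of_pos (by linarith) ω
    refine ⟨C / (Cμ * (2*A₀)^ω), by positivity, fun x r hr => ?_⟩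
    set R := max 1 (max r (d x₀ x)) with hR
    have hR1 : (1:ℝ) ≤ R := le_max_left _ _
    have hRr : r ≤ R := le_trans (le_max_left _ _) (le_max_right _ _)
    have hRd : d x₀ x ≤ R := le_trans (le_max_right _ _) (le_max_right _ _)
    have hRpos : (0:ℝ) < R := lt_of_lt_of_le one_pos hR1
    set lam := 2*A₀*R/r with hlam
    have hlam1 : 1 ≤ lam := by
      rw [hlam, le_div_iff₀ hr]
      nlinarith [hSHT.one_le_A, mul_le_mul_of_nonneg_left hRr hA0.le]
    have hlampos : (0:ℝ) < lam := lt_of_lt_of_le one_pos hlam1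
    have hlr : lam * r = 2*A₀*R := by
      rw [hlam]; field_simp
    have hsub : ball d x₀ R ⊆ ball d x (lam * r) := by
      intro y hy
      have htri : d x y ≤ A₀ * (d x x₀ + d x₀ y) := hSHT.triangle x x₀ y
      have hd : d x x₀ = d x₀ x := hSHT.symm x x₀
      simp only [ball, Set.mem_setOf_eq] at hy ⊢
      rw [hlr]
      nlinarith
    have key := doubling_scale hSHT x hr hlam1 hω
    have step : ENNReal.ofReal (C * R ^ ω) ≤ ENNReal.ofReal (Cμ * lam ^ ω) * μ (ball d x r) :=
      le_trans (hbd R hR1) (le_trans (measure_mono hsub) key)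
    have hrω : (0:ℝ) < r ^ ω := Real.rpow_pos_of_pos hr ω
    have hRω : (0:ℝ) < R ^ ω := Real.rpow_pos_of_pos hRpos ω
    have hEq : Cμ * lam ^ ω * (C / (Cμ * (2*A₀)^ω) * r ^ ω) = C * R ^ ω := by
      have hl : lam ^ ω = (2*A₀)^ω * R^ω / r^ω := by
        rw [hlam, Real.div_rpow (by positivity) hr.le,
          Real.mul_rpow (by positivity) hRpos.le]
      rw [hl]
      field_simp
    have hne : ENNReal.ofReal (Cμ * lam ^ ω) ≠ 0 := by
      rw [Ne, ENNReal.ofReal_eq_zero, not_le]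
      positivity
    rw [← ENNReal.mul_le_mul_iff_right hne ENNReal.ofReal_ne_top,
      ← ENNReal.ofReal_mul (by positivity), hEq]
    exact step
  · rintro ⟨C', hC', hbd⟩
    exact ⟨C', hC', Classical.arbitrary X,
      fun r hr => hbd _ r (lt_of_lt_of_le one_pos hr)⟩

end SHT
end
end

section
/- Let (X,d,μ) be a space of homogeneous type, let δ ∈ (0,1) with δ ≤ (2A₀)^{-10} be fixed, let s ∈ (0,∞), p ∈ (0,1], and ε ∈ (0,s). Let u : X → ℝ be measurable, (g_j)_{j∈ℤ} ∈ 𝔻^s(u), k ∈ ℤ, and x ∈ X, and define g := ( Σ_{j=k−2}^{∞} δ^{j(s−ε)p}·g_j^p )^{1/p}. Then g is an ε-gradient of u on the ball B(x,δ^{k−1}): there is a μ-null set E such that for all y, z ∈ B(x,δ^{k−1}) ∖ E one has |u(y)−u(z)| ≤ d(y,z)^ε·[g(y)+g(z)]. -/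
open MeasureTheory ENNReal

noncomputable section

namespace SHT

variable {X : Type*}

/-- `(g_k)_{k ∈ ℤ}` is an `s`-Hajłasz gradient of `u`. -/
def IsHajlaszGradient [MeasurableSpace X] (d : X → X → ℝ) (μ : Measure X) (δ s : ℝ)
    (u : X → ℝ) (g : ℤ → X → ℝ) : Prop :=
  (∀ k x, 0 ≤ g k x) ∧ (∀ k, Measurable (g k)) ∧
    ∃ E : Set X, μ E = 0 ∧ ∀ k : ℤ, ∀ x ∉ E, ∀ y ∉ E,
      δ ^ (k + 1) ≤ d x y → d x y < δ ^ k →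
      |u x - u y| ≤ d x y ^ s * (g k x + g k y)

/-- Let `s > 0`, `p ∈ (0,1]`, `ε ∈ (0,s)`, `(g_j) ∈ 𝔻^s(u)`,
`k ∈ ℤ` and `x ∈ X`. Then `g := (Σ_{j ≥ k-2} δ^{j(s-ε)p} g_j^p)^{1/p}`
(valued in `[0,∞]`) is an `ε`-gradient of `u` on the ball `B(x, δ^{k-1})`:
off a `μ`-null set, `|u(y) - u(z)| ≤ d(y,z)^ε (g(y) + g(z))` for
`y, z ∈ B(x, δ^{k-1})`. -/
theorem sum_is_gradient_on_ball
    [MeasurableSpace X] (d : X → X → ℝ) (μ : Measure X) (A₀ Cμ δ : ℝ)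
    (hSHT : IsSHT d μ A₀ Cμ)
    (hδ0 : 0 < δ) (hδ1 : δ < 1) (hδA : δ ≤ (2 * A₀) ^ (-10 : ℤ))
    (s p ε : ℝ) (hs : 0 < s) (hp0 : 0 < p) (hp1 : p ≤ 1)
    (hε0 : 0 < ε) (hεs : ε < s)
    (u : X → ℝ) (hu : Measurable u) (g : ℤ → X → ℝ)
    (hg : IsHajlaszGradient d μ δ s u g)
    (k : ℤ) (x : X) :
    ∃ E : Set X, μ E = 0 ∧
      ∀ y ∈ ball d x (δ ^ (k - 1)) \ E, ∀ z ∈ ball d x (δ ^ (k - 1)) \ E,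
        ENNReal.ofReal |u y - u z| ≤
          ENNReal.ofReal (d y z ^ ε) *
            ((∑' j : {j : ℤ // k - 2 ≤ j},
                ENNReal.ofReal ((δ ^ (j : ℤ)) ^ ((s - ε) * p)) *
                  ENNReal.ofReal (g j y) ^ p) ^ (1 / p) +
              (∑' j : {j : ℤ // k - 2 ≤ j},
                ENNReal.ofReal ((δ ^ (j : ℤ)) ^ ((s - ε) * p)) *
                  ENNReal.ofReal (g j z) ^ p) ^ (1 / p)) := by
  obtain ⟨hgnn, hgm, E, hE0, hgE⟩ := hg
  refine ⟨E, hE0, ?_⟩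
  rintro y ⟨hyB, hyE⟩ z ⟨hzB, hzE⟩
  by_cases hyz : y = z
  · subst hyz; simp
  have hD0 : 0 < d y z := by
    rcases (hSHT.nonneg y z).lt_or_eq with h | h
    · exact h
    · exact absurd ((hSHT.eq_zero_iff y z).mp h.symm) hyz
  have hδinv : (1:ℝ) < δ⁻¹ := (one_lt_inv₀ hδ0).mpr hδ1
  obtain ⟨n, hn1, hn2⟩ := exists_mem_Ico_zpow hD0 hδinv
  set j : ℤ := -n - 1 with hjdef
  have h1 : δ ^ (j + 1) ≤ d y z := by
    have : δ ^ (j + 1) = δ⁻¹ ^ n := by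
      rw [inv_zpow, ← zpow_neg]; congr 1; omega
    rw [this]; exact hn1
  have h2 : d y z < δ ^ j := by
    have : δ ^ j = δ⁻¹ ^ (n + 1) := by
      rw [inv_zpow, ← zpow_neg]; congr 1; omega
    rw [this]; exact hn2
  -- `2 A₀ δ ≤ 1`
  have hA1 : (1:ℝ) ≤ 2 * A₀ := by nlinarith [hSHT.one_le_A]
  have h2Aδ : 2 * A₀ * δ ≤ 1 := by
    have h10 : (2 * A₀) ^ (-10 : ℤ) * (2 * A₀) = (2 * A₀) ^ (-9 : ℤ) := by
      rw [← zpow_add_one₀ (by linarith : (2:ℝ) * A₀ ≠ 0)]; norm_num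
    have h9 : (2 * A₀) ^ (-9 : ℤ) ≤ (2 * A₀) ^ (0 : ℤ) :=
      zpow_le_zpow_right₀ hA1 (by norm_num)
    have := mul_le_mul_of_nonneg_right hδA (by linarith : (0:ℝ) ≤ 2 * A₀)
    rw [h10] at this
    simpa [mul_comm] using this.trans (by simpa using h9)
  -- `d y z < δ ^ (k - 2)`
  have hDlt : d y z < δ ^ (k - 2) := by
    have hyx : d y x < δ ^ (k - 1) := by rw [hSHT.symm]; exact hyB
    have htri := hSHT.triangle y x z
    have hsplit : δ ^ (k - 1) = δ * δ ^ (k - 2) := by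
      rw [show k - 1 = (k - 2) + 1 by omega, zpow_add_one₀ hδ0.ne']; ring
    have hδk2 : (0:ℝ) < δ ^ (k - 2) := zpow_pos hδ0 _
    have hA0 : (0:ℝ) < A₀ := lt_of_lt_of_le one_pos hSHT.one_le_A
    calc d y z ≤ A₀ * (d y x + d x z) := htri
      _ < A₀ * (δ ^ (k - 1) + δ ^ (k - 1)) := by
          apply mul_lt_mul_of_pos_left _ hA0
          exact add_lt_add hyx hzB
      _ = (2 * A₀ * δ) * δ ^ (k - 2) := by rw [hsplit]; ring
      _ ≤ 1 * δ ^ (k - 2) := mul_le_mul_of_nonneg_right h2Aδ hδk2.le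
      _ = δ ^ (k - 2) := one_mul _
  have hjk : k - 2 ≤ j := by
    by_contra hcon
    push_neg at hcon
    have : δ ^ (k - 2) ≤ δ ^ (j + 1) :=
      zpow_le_zpow_right_of_le_one₀ hδ0 hδ1.le (by omega)
    linarith [h1, hDlt]
  have hbound := hgE j y hyE z hzE h1 h2
  -- Notation
  set D := d y z with hDdef
  have hδj0 : (0:ℝ) < δ ^ j := zpow_pos hδ0 _
  have hse : (0:ℝ) ≤ s - ε := by linarith
  -- key: single-term bound
  have key : ∀ w : X,
      ENNReal.ofReal ((δ ^ j) ^ (s - ε)) * ENNReal.ofReal (g j w) ≤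
        (∑' j' : {j' : ℤ // k - 2 ≤ j'},
          ENNReal.ofReal ((δ ^ (j' : ℤ)) ^ ((s - ε) * p)) *
            ENNReal.ofReal (g j' w) ^ p) ^ (1 / p) := by
    intro w
    have hterm : ENNReal.ofReal ((δ ^ j) ^ ((s - ε) * p)) * ENNReal.ofReal (g j w) ^ p ≤
        ∑' j' : {j' : ℤ // k - 2 ≤ j'},
          ENNReal.ofReal ((δ ^ (j' : ℤ)) ^ ((s - ε) * p)) *
            ENNReal.ofReal (g j' w) ^ p :=
      ENNReal.le_tsum (⟨j, hjk⟩ : {j' : ℤ // k - 2 ≤ j'})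
    have heq : ENNReal.ofReal ((δ ^ j) ^ ((s - ε) * p)) * ENNReal.ofReal (g j w) ^ p =
        (ENNReal.ofReal ((δ ^ j) ^ (s - ε)) * ENNReal.ofReal (g j w)) ^ p := by
      rw [ENNReal.mul_rpow_of_nonneg _ _ hp0.le, Real.rpow_mul hδj0.le,
        ENNReal.ofReal_rpow_of_nonneg (Real.rpow_nonneg hδj0.le _) hp0.le]
    have := ENNReal.rpow_le_rpow hterm (by positivity : (0:ℝ) ≤ 1 / p)
    rw [heq] at hterm
    have h' := ENNReal.rpow_le_rpow hterm (by positivity : (0:ℝ) ≤ 1 / p)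
    rwa [← ENNReal.rpow_mul, mul_one_div_cancel hp0.ne', ENNReal.rpow_one] at h'
  -- main chain
  have hDs : D ^ s = D ^ ε * D ^ (s - ε) := by
    rw [← Real.rpow_add hD0]; ring_nf
  have hDse : ENNReal.ofReal (D ^ (s - ε)) ≤ ENNReal.ofReal ((δ ^ j) ^ (s - ε)) :=
    ENNReal.ofReal_le_ofReal (Real.rpow_le_rpow hD0.le h2.le hse)
  calc ENNReal.ofReal |u y - u z|
      ≤ ENNReal.ofReal (D ^ s * (g j y + g j z)) := ENNReal.ofReal_le_ofReal hbound
    _ = ENNReal.ofReal (D ^ ε) *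
          (ENNReal.ofReal (D ^ (s - ε)) * ENNReal.ofReal (g j y) +
           ENNReal.ofReal (D ^ (s - ε)) * ENNReal.ofReal (g j z)) := by
        rw [hDs, mul_assoc, ENNReal.ofReal_mul (Real.rpow_nonneg hD0.le ε), mul_add,
          ENNReal.ofReal_add (mul_nonneg (Real.rpow_nonneg hD0.le _) (hgnn j y))
            (mul_nonneg (Real.rpow_nonneg hD0.le _) (hgnn j z)),
          ENNReal.ofReal_mul (Real.rpow_nonneg hD0.le _),
          ENNReal.ofReal_mul (Real.rpow_nonneg hD0.le _)]
    _ ≤ ENNReal.ofReal (D ^ ε) *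
          (ENNReal.ofReal ((δ ^ j) ^ (s - ε)) * ENNReal.ofReal (g j y) +
           ENNReal.ofReal ((δ ^ j) ^ (s - ε)) * ENNReal.ofReal (g j z)) := by
        gcongr
    _ ≤ _ := by
        gcongr
        · exact key y
        · exact key z

end SHT
end
end
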